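/- Let 0 < α₁ < 1 and let (α_j)_{j≥0} be any sequence with α_j ∈ (0, α₁] for all j. Define x₁ = 1/2 and x_n = h_{α₀} ∘ h_{α₁} ∘ ⋯ ∘ h_{α_{n−2}}(1/2) for n ≥ 2, where h_α : [0,1] → [0,1/2] is the inverse of the left branch x ↦ x(1+(2x)^α) of T_α. Then the sequence (x_n)_{n≥1} is strictly decreasing and converges to 0, and there exists a constant C > 0 depending only on α₁ such that x_n ≤ C·n^{−1/α₁} for all n ≥ 1. -/

import Mathlib

open Set Filter

/-- The random backward orbit of `1/2` under the inverses `h` of the left branches: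
`xseq h α 0 = 1/2 = x₁` and `xseq h α n = h_{α₀} ∘ h_{α₁} ∘ ⋯ ∘ h_{α_{n−1}} (1/2) = x_{n+1}`. -/
noncomputable def xseq (h : ℝ → ℝ → ℝ) : (ℕ → ℝ) → ℕ → ℝ
  | _, 0 => 1/2
  | α, n + 1 => h (α 0) (xseq h (fun j => α (j + 1)) n)

/-- chord inequality from concavity of `t ↦ t^β` -/
lemma chord_ineq {β t : ℝ} (hb0 : 0 < β) (hb1 : β < 1) (ht0 : 0 ≤ t) (ht1 : t ≤ 1) :
    1 + (2 ^ β - 1) * t ≤ (1 + t) ^ β := by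
  have hcc := (Real.concaveOn_rpow hb0.le hb1.le).2
    (show (1:ℝ) ∈ Ici (0:ℝ) by norm_num) (show (2:ℝ) ∈ Ici (0:ℝ) by norm_num)
    (show 0 ≤ 1 - t by linarith) ht0 (by ring)
  simp only [smul_eq_mul] at hcc
  have h1 : (1 - t) * (1:ℝ) + t * 2 = 1 + t := by ring
  rw [h1] at hcc
  calc 1 + (2 ^ β - 1) * t = (1 - t) * (1:ℝ) ^ β + t * (2:ℝ) ^ β := by
        rw [Real.one_rpow]; ring
    _ ≤ (1 + t) ^ β := hcc

section aux

variable {α₁ : ℝ} (h0 : 0 < α₁) (h1 : α₁ < 1) (h : ℝ → ℝ → ℝ)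
  (H : ∀ a ∈ Ioc (0:ℝ) α₁, ∀ y ∈ Icc (0:ℝ) 1,
      h a y ∈ Icc (0:ℝ) (1/2) ∧ h a y * (1 + (2 * h a y) ^ a) = y)

include H in
lemma xseq_mem : ∀ (n : ℕ) (α : ℕ → ℝ), (∀ j, α j ∈ Ioc (0:ℝ) α₁) →
    xseq h α n ∈ Ioc (0:ℝ) (1/2) := by
  intro n
  induction n with
  | zero => intro α hα; constructor <;> norm_num [xseq]
  | succ n ih =>
    intro α hα
    have hy := ih (fun j => α (j+1)) (fun j => hα (j+1))
    set y := xseq h (fun j => α (j+1)) n with hy_def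
    have hy1 : y ∈ Icc (0:ℝ) 1 := ⟨hy.1.le, hy.2.trans (by norm_num)⟩
    obtain ⟨hmem, heq⟩ := H (α 0) (hα 0) y hy1
    have hpos : 0 < h (α 0) y := by
      rcases hmem.1.lt_or_eq with hlt | he
      · exact hlt
      · exfalso
        rw [← he] at heq
        simp at heq
        linarith [hy.1, heq]
    show h (α 0) y ∈ Ioc (0:ℝ) (1/2)
    exact ⟨hpos, hmem.2⟩

include h0 in
/-- key inequalities for one application of `h a` -/
lemma step_ineq {a x y : ℝ} (ha : a ∈ Ioc (0:ℝ) α₁) (hx : x ∈ Ioc (0:ℝ) (1/2))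
    (heq : x * (1 + (2 * x) ^ a) = y) :
    x * (1 + x ^ α₁) ≤ y ∧ y ≤ 2 * x := by
  have h2x0 : 0 < 2 * x := by linarith [hx.1]
  have h2x1 : 2 * x ≤ 1 := by linarith [hx.2]
  constructor
  · have e1 : (2 * x) ^ α₁ ≤ (2 * x) ^ a :=
      Real.rpow_le_rpow_of_exponent_ge h2x0 h2x1 ha.2
    have e2 : x ^ α₁ ≤ (2 * x) ^ α₁ :=
      Real.rpow_le_rpow hx.1.le (by linarith [hx.1]) h0.le
    calc x * (1 + x ^ α₁) ≤ x * (1 + (2 * x) ^ a) := by nlinarith [hx.1]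
      _ = y := heq
  · have e3 : (2 * x) ^ a ≤ 1 := Real.rpow_le_one h2x0.le h2x1 ha.1.le
    calc y = x * (1 + (2 * x) ^ a) := heq.symm
      _ ≤ x * 2 := by nlinarith [hx.1]
      _ = 2 * x := by ring

include h0 H in
lemma xseq_succ_lt : ∀ (n : ℕ) (α : ℕ → ℝ), (∀ j, α j ∈ Ioc (0:ℝ) α₁) →
    xseq h α (n + 1) < xseq h α n := by
  intro n
  induction n with
  | zero =>
    intro α hα
    have hx := xseq_mem h H 1 α hα
    set x := xseq h α 1 with hx_def
    have heq : x * (1 + (2 * x) ^ α 0) = 1/2 := by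
      have := (H (α 0) (hα 0) (1/2) (by norm_num)).2
      simpa [hx_def, xseq] using this
    have := step_ineq h0 (hα 0) hx heq
    have hxp : 0 < x ^ α₁ := Real.rpow_pos_of_pos hx.1 _
    calc xseq h α 1 = x := rfl
      _ < x * (1 + x ^ α₁) := by nlinarith [hx.1]
      _ ≤ 1/2 := this.1
      _ = xseq h α 0 := by simp [xseq]
  | succ n ih =>
    intro α hα
    set α' : ℕ → ℝ := fun j => α (j + 1) with hα'
    have hα'mem : ∀ j, α' j ∈ Ioc (0:ℝ) α₁ := fun j => hα (j + 1)
    have hlt : xseq h α' (n + 1) < xseq h α' n := ih α' hα'mem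
    have hm1 := xseq_mem h H (n + 1) α' hα'mem
    have hm2 := xseq_mem h H n α' hα'mem
    set y2 := xseq h α' (n + 1) with hy2
    set y1 := xseq h α' n with hy1
    have hy2m : y2 ∈ Icc (0:ℝ) 1 := ⟨hm1.1.le, hm1.2.trans (by norm_num)⟩
    have hy1m : y1 ∈ Icc (0:ℝ) 1 := ⟨hm2.1.le, hm2.2.trans (by norm_num)⟩
    obtain ⟨hu_mem, hu_eq⟩ := H (α 0) (hα 0) y2 hy2m
    obtain ⟨hv_mem, hv_eq⟩ := H (α 0) (hα 0) y1 hy1m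
    set u := h (α 0) y2 with hu
    set v := h (α 0) y1 with hv
    have huv : u < v := by
      by_contra hcon
      push_neg at hcon
      have e1 : (2 * v) ^ α 0 ≤ (2 * u) ^ α 0 :=
        Real.rpow_le_rpow (by linarith [hv_mem.1]) (by linarith) (hα 0).1.le
      have : y1 ≤ y2 := by
        calc y1 = v * (1 + (2 * v) ^ α 0) := hv_eq.symm
          _ ≤ u * (1 + (2 * u) ^ α 0) := by
            have h2v : (0:ℝ) ≤ (2 * v) ^ α 0 :=
              Real.rpow_nonneg (by linarith [hv_mem.1]) _
            nlinarith [hv_mem.1]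
          _ = y2 := hu_eq
      linarith
    show xseq h α (n + 1 + 1) < xseq h α (n + 1)
    exact huv

include h0 h1 H in
lemma xseq_potential : ∀ (n : ℕ) (α : ℕ → ℝ), (∀ j, α j ∈ Ioc (0:ℝ) α₁) →
    2 ^ α₁ + ((2:ℝ) ^ α₁ - 1) / 2 ^ α₁ * n ≤ ((xseq h α n) ^ α₁)⁻¹ := by
  have h2b : (1:ℝ) < 2 ^ α₁ := Real.one_lt_rpow_iff_of_pos (by norm_num) |>.2 (Or.inl ⟨by norm_num, h0⟩)
  set c : ℝ := ((2:ℝ) ^ α₁ - 1) / 2 ^ α₁ with hc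
  have hc2 : c * 2 ^ α₁ = 2 ^ α₁ - 1 := by
    rw [hc, div_mul_cancel₀ _ (by positivity)]
  intro n
  induction n with
  | zero =>
    intro α hα
    have : xseq h α 0 = 1/2 := by simp [xseq]
    rw [this]
    have : ((1:ℝ)/2) ^ α₁ = ((2:ℝ) ^ α₁)⁻¹ := by
      rw [one_div, Real.inv_rpow (by norm_num)]
    rw [this, inv_inv]
    simp
  | succ n ih =>
    intro α hα
    set α' : ℕ → ℝ := fun j => α (j + 1) with hα'
    have hα'mem : ∀ j, α' j ∈ Ioc (0:ℝ) α₁ := fun j => hα (j + 1)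
    have hym := xseq_mem h H n α' hα'mem
    set y := xseq h α' n with hy_def
    have hxm := xseq_mem h H (n + 1) α hα
    set x := xseq h α (n + 1) with hx_def
    have heq : x * (1 + (2 * x) ^ α 0) = y := by
      have hy1 : y ∈ Icc (0:ℝ) 1 := ⟨hym.1.le, hym.2.trans (by norm_num)⟩
      have := (H (α 0) (hα 0) y hy1).2
      simpa [hx_def, xseq] using this
    obtain ⟨hstep1, hstep2⟩ := step_ineq h0 (hα 0) hxm heq
    -- abbreviations
    set t := x ^ α₁ with ht_def
    have ht0 : 0 < t := Real.rpow_pos_of_pos hxm.1 _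
    have ht1 : t ≤ 1 := Real.rpow_le_one hxm.1.le (by linarith [hxm.2]) h0.le
    have hY0 : 0 < y ^ α₁ := Real.rpow_pos_of_pos hym.1 _
    -- lower bound on y^α₁
    have hb1 : t + (2 ^ α₁ - 1) * (t * t) ≤ y ^ α₁ := by
      have e1 : (x * (1 + t)) ^ α₁ ≤ y ^ α₁ :=
        Real.rpow_le_rpow (by nlinarith [hxm.1]) hstep1 h0.le
      rw [Real.mul_rpow hxm.1.le (by linarith)] at e1
      have e2 : 1 + (2 ^ α₁ - 1) * t ≤ (1 + t) ^ α₁ := chord_ineq h0 h1 ht0.le ht1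
      calc t + (2 ^ α₁ - 1) * (t * t) = t * (1 + (2 ^ α₁ - 1) * t) := by ring
        _ ≤ t * (1 + t) ^ α₁ := by nlinarith
        _ = x ^ α₁ * (1 + t) ^ α₁ := rfl
        _ ≤ y ^ α₁ := e1
    -- upper bound on y^α₁
    have hb2 : y ^ α₁ ≤ 2 ^ α₁ * t := by
      have e1 : y ^ α₁ ≤ (2 * x) ^ α₁ :=
        Real.rpow_le_rpow (by linarith [hym.1]) hstep2 h0.le
      rwa [Real.mul_rpow (by norm_num) hxm.1.le] at e1
    -- the key increment
    have hkey : (y ^ α₁)⁻¹ + c ≤ t⁻¹ := by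
      have hnum : t + c * t * y ^ α₁ ≤ y ^ α₁ := by
        have : c * t * y ^ α₁ ≤ (2 ^ α₁ - 1) * (t * t) := by
          have hc0 : 0 ≤ c := le_of_lt (by rw [hc]; exact div_pos (by linarith) (by positivity))
          have e3 : c * t * y ^ α₁ ≤ c * t * (2 ^ α₁ * t) :=
            mul_le_mul_of_nonneg_left hb2 (mul_nonneg hc0 ht0.le)
          have e4 : c * t * (2 ^ α₁ * t) = (2 ^ α₁ - 1) * (t * t) := by
            rw [← hc2]; ring
          linarith
        linarith
      rw [← sub_nonneg]
      have hrw : t⁻¹ - ((y ^ α₁)⁻¹ + c) = (y ^ α₁ - (t + c * t * y ^ α₁)) / (t * y ^ α₁) := by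
        field_simp
      rw [hrw]
      exact div_nonneg (by linarith) (by positivity)
    have hIH := ih α' hα'mem
    push_cast
    calc 2 ^ α₁ + c * ((n : ℝ) + 1) = (2 ^ α₁ + c * n) + c := by ring
      _ ≤ (y ^ α₁)⁻¹ + c := by linarith
      _ ≤ t⁻¹ := hkey

end aux

theorem backward_orbit_polynomial_decay (α₁ : ℝ) (h0 : 0 < α₁) (h1 : α₁ < 1) :
    ∃ C > 0, ∀ (α : ℕ → ℝ), (∀ j, α j ∈ Ioc (0:ℝ) α₁) →
      ∀ (h : ℝ → ℝ → ℝ),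
        (∀ a ∈ Ioc (0:ℝ) α₁, ∀ y ∈ Icc (0:ℝ) 1,
          h a y ∈ Icc (0:ℝ) (1/2) ∧ h a y * (1 + (2 * h a y) ^ a) = y) →
        StrictAnti (fun n => xseq h α n) ∧
        Tendsto (fun n => xseq h α n) atTop (nhds 0) ∧
        ∀ n : ℕ, 1 ≤ n → xseq h α (n - 1) ≤ C * (n : ℝ) ^ (-(1/α₁)) := by
  have h2b : (1:ℝ) < 2 ^ α₁ := Real.one_lt_rpow_iff_of_pos (by norm_num) |>.2 (Or.inl ⟨by norm_num, h0⟩)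
  set c : ℝ := ((2:ℝ) ^ α₁ - 1) / 2 ^ α₁ with hc
  have hc0 : 0 < c := by rw [hc]; exact div_pos (by linarith) (by positivity)
  have hc1 : c < 1 := by
    rw [hc, div_lt_one (by positivity)]
    linarith
  set C : ℝ := (c ^ (1/α₁))⁻¹ with hC
  have hC0 : 0 < C := by
    rw [hC]
    exact inv_pos.2 (Real.rpow_pos_of_pos hc0 _)
  refine ⟨C, hC0, ?_⟩
  intro α hα h H
  -- the uniform bound: x_m ≤ C * (m+1)^(-1/α₁)
  have hbound : ∀ m : ℕ, xseq h α m ≤ C * ((m : ℝ) + 1) ^ (-(1/α₁)) := by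
    intro m
    have hpot := xseq_potential h0 h1 h H m α hα
    have hxm := xseq_mem h H m α hα
    set x := xseq h α m with hx_def
    have hA0 : 0 < c * ((m : ℝ) + 1) := mul_pos hc0 (by positivity)
    have hA : c * ((m : ℝ) + 1) ≤ (x ^ α₁)⁻¹ := by
      have : c * ((m : ℝ) + 1) ≤ 2 ^ α₁ + c * m := by nlinarith
      linarith
    have hxb0 : 0 < x ^ α₁ := Real.rpow_pos_of_pos hxm.1 _
    have hxA : x ^ α₁ ≤ (c * ((m : ℝ) + 1))⁻¹ := by
      rw [← inv_inv (x ^ α₁)]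
      exact inv_anti₀ hA0 hA
    have hmono : (x ^ α₁) ^ (1/α₁) ≤ ((c * ((m : ℝ) + 1))⁻¹) ^ (1/α₁) :=
      Real.rpow_le_rpow hxb0.le hxA (by positivity)
    have hL : (x ^ α₁) ^ (1/α₁) = x := by
      rw [← Real.rpow_mul hxm.1.le, mul_one_div_cancel h0.ne', Real.rpow_one]
    have hR : ((c * ((m : ℝ) + 1))⁻¹) ^ (1/α₁) = C * ((m : ℝ) + 1) ^ (-(1/α₁)) := by
      rw [Real.inv_rpow hA0.le, Real.mul_rpow hc0.le (by positivity), mul_inv, hC,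
        Real.rpow_neg (by positivity)]
    rw [hL, hR] at hmono
    exact hmono
  refine ⟨?_, ?_, ?_⟩
  · exact strictAnti_nat_of_succ_lt (fun n => xseq_succ_lt h0 h H n α hα)
  · have hg : Tendsto (fun m : ℕ => C * ((m : ℝ) + 1) ^ (-(1/α₁))) atTop (nhds 0) := by
      have h1' : Tendsto (fun m : ℕ => ((m : ℝ) + 1)) atTop atTop :=
        tendsto_atTop_add_const_right _ 1 tendsto_natCast_atTop_atTop
      have h2' : Tendsto (fun m : ℕ => ((m : ℝ) + 1) ^ (-(1/α₁))) atTop (nhds 0) :=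
        (tendsto_rpow_neg_atTop (by positivity)).comp h1'
      simpa using h2'.const_mul C
    refine squeeze_zero (fun m => (xseq_mem h H m α hα).1.le) hbound hg
  · intro n hn
    have hcast : ((n : ℝ)) = ((n - 1 : ℕ) : ℝ) + 1 := by
      have : (n - 1) + 1 = n := Nat.succ_pred_eq_of_pos hn
      rw [← this]
      push_cast
      ring
    rw [hcast]
    exact hbound (n - 1)
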